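/- Let H ∈ (1/2, 1) and define g : [0,∞) → ℝ by g(z) = e^{-z} · ∫_0^z e^v · v^{H-3/2} dv. Then s^{3/2-H} · g(s) → 1 as s → ∞. -/

import Mathlib

open Filter Set

private lemma stmt15_integrable {a : ℝ} (ha : -1 < a) {c d : ℝ} (h0 : 0 ≤ c) (hcd : c ≤ d) :
    IntervalIntegrable (fun v => Real.exp v * v ^ a) MeasureTheory.volume c d := by
  have hg : IntervalIntegrable (fun v : ℝ => Real.exp d * v ^ a)
      MeasureTheory.volume c d :=
    (intervalIntegral.intervalIntegrable_rpow' ha).const_mul _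
  refine hg.mono_fun ?_ ?_
  · rw [uIoc_of_le hcd]
    refine ContinuousOn.aestronglyMeasurable (fun v hv => ?_) measurableSet_Ioc
    have hv0 : 0 < v := lt_of_le_of_lt h0 hv.1
    exact (Real.continuous_exp.continuousAt.mul
      (Real.continuousAt_rpow_const v a (Or.inl hv0.ne'))).continuousWithinAt
  · rw [uIoc_of_le hcd]
    refine (MeasureTheory.ae_restrict_iff' measurableSet_Ioc).2
      (MeasureTheory.ae_of_all _ ?_)
    intro v hv
    have hv0 : 0 < v := lt_of_le_of_lt h0 hv.1
    have h1 : 0 ≤ v ^ a := Real.rpow_nonneg hv0.le a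
    have h2 : Real.exp v ≤ Real.exp d := Real.exp_le_exp.2 hv.2
    simp only [Real.norm_eq_abs, abs_of_nonneg (mul_nonneg (Real.exp_pos v).le h1),
      abs_of_nonneg (mul_nonneg (Real.exp_pos d).le h1)]
    exact mul_le_mul_of_nonneg_right h2 h1

private lemma stmt15_lower {a s : ℝ} (ha1 : -1 < a) (ha0 : a < 0) (hs4 : 4 ≤ s) :
    1 - Real.exp (-Real.sqrt s)
      ≤ s ^ (-a) * (Real.exp (-s) * ∫ v in (0 : ℝ)..s, Real.exp v * v ^ a) := by
  have hs0 : (0:ℝ) < s := by linarith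
  have hss : Real.sqrt s * Real.sqrt s = s := Real.mul_self_sqrt hs0.le
  have hq0 : 0 ≤ Real.sqrt s := Real.sqrt_nonneg s
  have h2q : 2 ≤ Real.sqrt s := by nlinarith
  set c : ℝ := s - Real.sqrt s with hc_def
  have hc0 : 0 < c := by simp only [hc_def]; nlinarith
  have hcs : c ≤ s := by simp only [hc_def]; linarith
  have hint1 : IntervalIntegrable (fun v => Real.exp v * v ^ a)
      MeasureTheory.volume 0 c := stmt15_integrable ha1 le_rfl hc0.le
  have hint2 : IntervalIntegrable (fun v => Real.exp v * v ^ a)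
      MeasureTheory.volume c s := stmt15_integrable ha1 hc0.le hcs
  have hsplit : (∫ v in (0:ℝ)..s, Real.exp v * v ^ a)
      = (∫ v in (0:ℝ)..c, Real.exp v * v ^ a) + ∫ v in c..s, Real.exp v * v ^ a :=
    (intervalIntegral.integral_add_adjacent_intervals hint1 hint2).symm
  have hsneg : 0 < s ^ (-a) := Real.rpow_pos_of_pos hs0 (-a)
  have hI0 : 0 ≤ ∫ v in (0:ℝ)..c, Real.exp v * v ^ a := by
    refine intervalIntegral.integral_nonneg hc0.le fun v hv => ?_
    exact mul_nonneg (Real.exp_pos v).le (Real.rpow_nonneg hv.1 a)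
  have hexpint : IntervalIntegrable (fun v : ℝ => Real.exp v * s ^ a)
      MeasureTheory.volume c s :=
    intervalIntegral.intervalIntegrable_exp.mul_const _
  have hI2 : (∫ v in c..s, Real.exp v * s ^ a) ≤ ∫ v in c..s, Real.exp v * v ^ a := by
    refine intervalIntegral.integral_mono_on hcs hexpint hint2 fun v hv => ?_
    have hv0 : 0 < v := lt_of_lt_of_le hc0 hv.1
    exact mul_le_mul_of_nonneg_left
      (Real.rpow_le_rpow_of_nonpos hv0 hv.2 ha0.le) (Real.exp_pos v).le
  have hval : (∫ v in c..s, Real.exp v * s ^ a)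
      = (Real.exp s - Real.exp c) * s ^ a := by
    rw [intervalIntegral.integral_mul_const, integral_exp]
  have hkey : s ^ (-a) * (Real.exp (-s) * ((Real.exp s - Real.exp c) * s ^ a))
      = 1 - Real.exp (-Real.sqrt s) := by
    have hs' : s ^ (-a) * s ^ a = 1 := by
      rw [← Real.rpow_add hs0]; simp
    have h2 : Real.exp (-s) * Real.exp s = 1 := by rw [← Real.exp_add]; simp
    have h3 : Real.exp (-s) * Real.exp c = Real.exp (-Real.sqrt s) := by
      rw [← Real.exp_add]; congr 1; rw [hc_def]; ring
    linear_combination (Real.exp (-s) * Real.exp s - Real.exp (-s) * Real.exp c) * hs'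
      + h2 - h3
  calc 1 - Real.exp (-Real.sqrt s)
      = s ^ (-a) * (Real.exp (-s) * ((Real.exp s - Real.exp c) * s ^ a)) := hkey.symm
    _ ≤ s ^ (-a) * (Real.exp (-s) * ∫ v in (0:ℝ)..s, Real.exp v * v ^ a) := by
        refine mul_le_mul_of_nonneg_left
          (mul_le_mul_of_nonneg_left ?_ (Real.exp_pos (-s)).le) hsneg.le
        rw [hsplit, ← hval]
        linarith

private lemma stmt15_upper {a s : ℝ} (ha1 : -1 < a) (ha0 : a < 0) (hs4 : 4 ≤ s) :
    s ^ (-a) * (Real.exp (-s) * ∫ v in (0 : ℝ)..s, Real.exp v * v ^ a)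
      ≤ Real.exp (-Real.sqrt s) * s / (a + 1) + ((s - Real.sqrt s) / s) ^ a := by
  have hs0 : (0:ℝ) < s := by linarith
  have ha1' : 0 < a + 1 := by linarith
  have hss : Real.sqrt s * Real.sqrt s = s := Real.mul_self_sqrt hs0.le
  have hq0 : 0 ≤ Real.sqrt s := Real.sqrt_nonneg s
  have h2q : 2 ≤ Real.sqrt s := by nlinarith
  set c : ℝ := s - Real.sqrt s with hc_def
  have hc0 : 0 < c := by simp only [hc_def]; nlinarith
  have hcs : c ≤ s := by simp only [hc_def]; linarith
  have hint1 : IntervalIntegrable (fun v => Real.exp v * v ^ a)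
      MeasureTheory.volume 0 c := stmt15_integrable ha1 le_rfl hc0.le
  have hint2 : IntervalIntegrable (fun v => Real.exp v * v ^ a)
      MeasureTheory.volume c s := stmt15_integrable ha1 hc0.le hcs
  have hsplit : (∫ v in (0:ℝ)..s, Real.exp v * v ^ a)
      = (∫ v in (0:ℝ)..c, Real.exp v * v ^ a) + ∫ v in c..s, Real.exp v * v ^ a :=
    (intervalIntegral.integral_add_adjacent_intervals hint1 hint2).symm
  have hsneg : 0 < s ^ (-a) := Real.rpow_pos_of_pos hs0 (-a)
  have hI1 : (∫ v in (0:ℝ)..c, Real.exp v * v ^ a)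
      ≤ Real.exp c * (c ^ (a+1) / (a+1)) := by
    have hmono : (∫ v in (0:ℝ)..c, Real.exp v * v ^ a)
        ≤ ∫ v in (0:ℝ)..c, Real.exp c * v ^ a := by
      refine intervalIntegral.integral_mono_on hc0.le hint1
        ((intervalIntegral.intervalIntegrable_rpow' ha1).const_mul _) fun v hv => ?_
      exact mul_le_mul_of_nonneg_right (Real.exp_le_exp.2 hv.2)
        (Real.rpow_nonneg hv.1 a)
    have hval1 : (∫ v in (0:ℝ)..c, Real.exp c * v ^ a)
        = Real.exp c * (c ^ (a+1) / (a+1)) := by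
      rw [intervalIntegral.integral_const_mul, integral_rpow (Or.inl ha1),
        Real.zero_rpow ha1'.ne']
      ring_nf
    linarith [hmono, hval1.le]
  have hI2 : (∫ v in c..s, Real.exp v * v ^ a) ≤ c ^ a * Real.exp s := by
    have hexpint : IntervalIntegrable (fun v : ℝ => Real.exp v * c ^ a)
        MeasureTheory.volume c s :=
      intervalIntegral.intervalIntegrable_exp.mul_const _
    have hmono : (∫ v in c..s, Real.exp v * v ^ a)
        ≤ ∫ v in c..s, Real.exp v * c ^ a := by
      refine intervalIntegral.integral_mono_on hcs hint2 hexpint fun v hv => ?_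
      exact mul_le_mul_of_nonneg_left
        (Real.rpow_le_rpow_of_nonpos hc0 hv.1 ha0.le) (Real.exp_pos v).le
    have hval2 : (∫ v in c..s, Real.exp v * c ^ a)
        = (Real.exp s - Real.exp c) * c ^ a := by
      rw [intervalIntegral.integral_mul_const, integral_exp]
    have hcpa : 0 ≤ c ^ a := Real.rpow_nonneg hc0.le a
    have h3 : (Real.exp s - Real.exp c) * c ^ a ≤ Real.exp s * c ^ a := by
      refine mul_le_mul_of_nonneg_right ?_ hcpa
      linarith [(Real.exp_pos c).le]
    calc (∫ v in c..s, Real.exp v * v ^ a)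
        ≤ (Real.exp s - Real.exp c) * c ^ a := hmono.trans hval2.le
      _ ≤ Real.exp s * c ^ a := h3
      _ = c ^ a * Real.exp s := mul_comm _ _
  have hca1 : c ^ (a+1) ≤ s ^ (a+1) := Real.rpow_le_rpow hc0.le hcs ha1'.le
  have hs1 : s ^ (-a) * s ^ (a+1) = s := by
    rw [← Real.rpow_add hs0]
    norm_num
  have hratio : s ^ (-a) * c ^ a = (c / s) ^ a := by
    rw [Real.div_rpow hc0.le hs0.le, Real.rpow_neg hs0.le,
      div_eq_mul_inv, mul_comm]
  have hexpc : Real.exp (-s) * Real.exp c = Real.exp (-Real.sqrt s) := by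
    rw [← Real.exp_add]; congr 1; rw [hc_def]; ring
  have hes : Real.exp (-s) * Real.exp s = 1 := by
    rw [← Real.exp_add]; simp
  calc s ^ (-a) * (Real.exp (-s) * ∫ v in (0:ℝ)..s, Real.exp v * v ^ a)
      ≤ s ^ (-a) * (Real.exp (-s) *
          (Real.exp c * (c ^ (a+1) / (a+1)) + c ^ a * Real.exp s)) := by
        refine mul_le_mul_of_nonneg_left
          (mul_le_mul_of_nonneg_left ?_ (Real.exp_pos (-s)).le) hsneg.le
        rw [hsplit]; linarith
    _ = Real.exp (-Real.sqrt s) * (s ^ (-a) * c ^ (a+1)) / (a+1)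
        + (c / s) ^ a := by
        rw [← hratio]
        have hd : (a + 1) ≠ 0 := ha1'.ne'
        linear_combination ((s ^ (-a) * c ^ (a+1)) / (a+1)) * hexpc
          + ((s ^ (-a) * c ^ a)) * hes
    _ ≤ Real.exp (-Real.sqrt s) * s / (a+1) + (c / s) ^ a := by
        have h1 : s ^ (-a) * c ^ (a+1) ≤ s := by
          calc s ^ (-a) * c ^ (a+1) ≤ s ^ (-a) * s ^ (a+1) :=
                mul_le_mul_of_nonneg_left hca1 hsneg.le
            _ = s := hs1
        have h2 : 0 ≤ Real.exp (-Real.sqrt s) := (Real.exp_pos _).le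
        have h3 : Real.exp (-Real.sqrt s) * (s ^ (-a) * c ^ (a+1))
            ≤ Real.exp (-Real.sqrt s) * s := mul_le_mul_of_nonneg_left h1 h2
        exact add_le_add ((div_le_div_iff_of_pos_right ha1').2 h3) le_rfl

private lemma stmt15_main {a : ℝ} (ha1 : -1 < a) (ha0 : a < 0) :
    Tendsto (fun s : ℝ =>
        s ^ (-a) * (Real.exp (-s) * ∫ v in (0 : ℝ)..s, Real.exp v * v ^ a))
      atTop (nhds 1) := by
  have hsqrt : Tendsto Real.sqrt atTop atTop := by
    refine (tendsto_rpow_atTop (by norm_num : (0:ℝ) < 1/2)).congr' ?_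
    filter_upwards [eventually_ge_atTop (0:ℝ)] with x hx
    rw [Real.sqrt_eq_rpow]
  have hexp0 : Tendsto (fun s : ℝ => Real.exp (-Real.sqrt s)) atTop (nhds 0) :=
    Real.tendsto_exp_neg_atTop_nhds_zero.comp hsqrt
  have ha1' : 0 < a + 1 := by linarith
  have hlo : Tendsto (fun s : ℝ => 1 - Real.exp (-Real.sqrt s)) atTop (nhds 1) := by
    simpa using tendsto_const_nhds.sub hexp0
  have hup1 : Tendsto (fun s : ℝ => Real.exp (-Real.sqrt s) * s / (a + 1)) atTop (nhds 0) := by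
    have h2 : Tendsto (fun x : ℝ => x ^ (2:ℕ) * Real.exp (-x)) atTop (nhds 0) :=
      Real.tendsto_pow_mul_exp_neg_atTop_nhds_zero 2
    have h3 : Tendsto (fun s : ℝ => Real.sqrt s ^ (2:ℕ) * Real.exp (-Real.sqrt s))
        atTop (nhds 0) := h2.comp hsqrt
    have h4 : Tendsto (fun s : ℝ => Real.exp (-Real.sqrt s) * s) atTop (nhds 0) := by
      refine h3.congr' ?_
      filter_upwards [eventually_ge_atTop (0:ℝ)] with s hs
      rw [Real.sq_sqrt hs, mul_comm]
    simpa using h4.div_const (a + 1)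
  have hup2 : Tendsto (fun s : ℝ => ((s - Real.sqrt s) / s) ^ a) atTop (nhds 1) := by
    have hinner : Tendsto (fun s : ℝ => (s - Real.sqrt s) / s) atTop (nhds 1) := by
      have h5 : Tendsto (fun s : ℝ => 1 - (Real.sqrt s)⁻¹) atTop (nhds 1) := by
        simpa using tendsto_const_nhds.sub hsqrt.inv_tendsto_atTop
      refine h5.congr' ?_
      filter_upwards [eventually_gt_atTop (0:ℝ)] with s hs
      have hq : 0 < Real.sqrt s := Real.sqrt_pos.2 hs
      rw [sub_div, div_self hs.ne', Real.sqrt_div_self]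
    have hcont : ContinuousAt (fun x : ℝ => x ^ a) 1 :=
      Real.continuousAt_rpow_const 1 a (Or.inl one_ne_zero)
    have h6 := hcont.tendsto.comp hinner
    simpa [Real.one_rpow, Function.comp_def] using h6
  have hup : Tendsto (fun s : ℝ =>
      Real.exp (-Real.sqrt s) * s / (a + 1) + ((s - Real.sqrt s) / s) ^ a) atTop (nhds 1) := by
    simpa using hup1.add hup2
  refine tendsto_of_tendsto_of_tendsto_of_le_of_le' hlo hup ?_ ?_
  · filter_upwards [eventually_ge_atTop (4:ℝ)] with s hs4
    exact stmt15_lower ha1 ha0 hs4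
  · filter_upwards [eventually_ge_atTop (4:ℝ)] with s hs4
    exact stmt15_upper ha1 ha0 hs4

/-- For `H ∈ (1/2, 1)` and
`g(z) = e^(-z) ∫_0^z e^v v^(H-3/2) dv`, one has `s^(3/2-H) g(s) → 1` as `s → ∞`. -/
theorem stmt15 (H : ℝ) (hH : H ∈ Ioo (1 / 2 : ℝ) 1) :
    Tendsto (fun s : ℝ =>
        s ^ (3 / 2 - H) * (Real.exp (-s) * ∫ v in (0 : ℝ)..s, Real.exp v * v ^ (H - 3 / 2)))
      atTop (nhds 1) := by
  obtain ⟨h1, h2⟩ := hH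
  have h := stmt15_main (a := H - 3/2) (by linarith) (by linarith)
  have heq : (3 / 2 - H) = -(H - 3/2) := by ring
  rw [heq]
  exact h
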